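/- arXiv:2507.00727 — 3 statements merged into one kernel-verified Lean document; each statement's English description precedes it below -/
import Mathlib

section
/- Fix an integer t ≥ 2 and nonnegative integers a_1,…,a_{t−1}, not all zero, and let R = ⋃_{s=1}^{t−1} { (Y,i) : Y ⊆ [t], |Y| = s, i ∈ [a_s] }. Then the array B is a (K', F', Z', S) placement delivery array with K' = t, F' = Σ_{s=1}^{t−1} a_s·C(t,s), Z' = Σ_{s=1}^{t−1} a_s·C(t−1, s−1) and S = Σ_{s=1}^{t−1} a_s·C(t, s+1): each column of B contains exactly Z' stars; B has exactly S distinct integer entries and each of them occurs at least once; and whenever two distinct cells of B carry the same integer entry, they lie in distinct rows and distinct columns, and the two cross cells (row of one, column of the other) both contain ⋆. -/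
open Finset

/-- The row-index set `R = ⋃_{s=1}^{t−1} { (Y,i) : Y ⊆ [t], |Y| = s, i ∈ [a_s] }`
of the array `B`, where `[n] = {1, …, n}`. -/
def Rset (t : ℕ) (a : ℕ → ℕ) : Finset (Finset ℕ × ℕ) :=
  (Finset.Icc 1 (t - 1)).biUnion fun s =>
    (Finset.powersetCard s (Finset.Icc 1 t)) ×ˢ (Finset.Icc 1 (a s))

/-- The entry of the array `B` at row `(Y,i)` and column `j`:
`none` represents the star `⋆` (when `j ∈ Y`), and `some (Y ∪ {j}, i)` is the
integer entry (when `j ∉ Y`). -/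
def Bent (p : Finset ℕ × ℕ) (j : ℕ) : Option (Finset ℕ × ℕ) :=
  if j ∈ p.1 then none else some (insert j p.1, p.2)

/-- The set of integer entries of the array `B`. -/
def IntEntries (t : ℕ) (a : ℕ → ℕ) : Finset (Finset ℕ × ℕ) :=
  (((Rset t a) ×ˢ (Finset.Icc 1 t)).filter
      (fun q : (Finset ℕ × ℕ) × ℕ => q.2 ∉ q.1.1)).image
    (fun q : (Finset ℕ × ℕ) × ℕ => (insert q.2 q.1.1, q.1.2))

lemma count_contains {u : Finset ℕ} {j : ℕ} (hj : j ∈ u) {s : ℕ} (hs : 1 ≤ s) :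
    ((Finset.powersetCard s u).filter (fun Y => j ∈ Y)).card =
      Nat.choose (u.card - 1) (s - 1) := by
  have h : ((Finset.powersetCard s u).filter (fun Y => j ∈ Y)).card
      = (Finset.powersetCard (s - 1) (u.erase j)).card := by
    apply Finset.card_bij (fun Y _ => Y.erase j)
    · intro Y hY
      simp only [mem_filter, mem_powersetCard] at hY
      simp only [mem_powersetCard]
      constructor
      · intro x hx
        rw [Finset.mem_erase] at hx ⊢
        exact ⟨hx.1, hY.1.1 hx.2⟩
      · rw [Finset.card_erase_of_mem hY.2, hY.1.2]
    · intro Y hY Y' hY' h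
      simp only [mem_filter] at hY hY'
      rw [← Finset.insert_erase hY.2, ← Finset.insert_erase hY'.2, h]
    · intro Z hZ
      simp only [mem_powersetCard] at hZ
      have hjZ : j ∉ Z := fun h => (Finset.mem_erase.1 (hZ.1 h)).1 rfl
      refine ⟨insert j Z, ?_, by rw [Finset.erase_insert hjZ]⟩
      simp only [mem_filter, mem_powersetCard, Finset.mem_insert_self, and_true]
      constructor
      · intro x hx
        rcases Finset.mem_insert.1 hx with rfl | hx
        · exact hj
        · exact Finset.mem_of_mem_erase (hZ.1 hx)
      · rw [Finset.card_insert_of_notMem hjZ, hZ.2]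
        omega
  rw [h, Finset.card_powersetCard, Finset.card_erase_of_mem hj]

lemma rset_pairwise (t : ℕ) (a : ℕ → ℕ) :
    ∀ s ∈ Finset.Icc 1 (t - 1), ∀ s' ∈ Finset.Icc 1 (t - 1), s ≠ s' →
      Disjoint ((Finset.powersetCard s (Finset.Icc 1 t)) ×ˢ (Finset.Icc 1 (a s)))
        ((Finset.powersetCard s' (Finset.Icc 1 t)) ×ˢ (Finset.Icc 1 (a s'))) := by
  intro s _ s' _ hss
  rw [Finset.disjoint_left]
  rintro ⟨Y, i⟩ h1 h2
  rw [Finset.mem_product, mem_powersetCard] at h1 h2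
  exact hss (h1.1.2 ▸ h2.1.2)

lemma intEntries_eq (t : ℕ) (ht : 2 ≤ t) (a : ℕ → ℕ) :
    IntEntries t a = (Finset.Icc 1 (t - 1)).biUnion fun s =>
      (Finset.powersetCard (s + 1) (Finset.Icc 1 t)) ×ˢ (Finset.Icc 1 (a s)) := by
  ext ⟨Z, i⟩
  simp only [IntEntries, Finset.mem_image, Finset.mem_filter, Finset.mem_product,
    Finset.mem_biUnion, Rset, Prod.ext_iff]
  constructor
  · rintro ⟨⟨⟨Y, i'⟩, j⟩, ⟨⟨⟨s, hs, hY, hi'⟩, hj⟩, hjY⟩, hZ, hi⟩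
    rw [mem_powersetCard] at hY
    refine ⟨s, hs, ?_, hi ▸ hi'⟩
    rw [mem_powersetCard]
    constructor
    · rw [← hZ]
      intro x hx
      rcases Finset.mem_insert.1 hx with rfl | hx
      · exact hj
      · exact hY.1 hx
    · rw [← hZ, Finset.card_insert_of_notMem hjY, hY.2]
  · rintro ⟨s, hs, hZ, hi⟩
    rw [mem_powersetCard] at hZ
    have hZne : Z.Nonempty := by
      rw [← Finset.card_pos, hZ.2]; omega
    obtain ⟨j, hjZ⟩ := hZne
    refine ⟨⟨⟨Z.erase j, i⟩, j⟩, ⟨⟨⟨s, hs, ?_, hi⟩, hZ.1 hjZ⟩,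
      Finset.notMem_erase j Z⟩, Finset.insert_erase hjZ, rfl⟩
    rw [mem_powersetCard]
    exact ⟨fun x hx => hZ.1 (Finset.mem_of_mem_erase hx),
      by rw [Finset.card_erase_of_mem hjZ, hZ.2]; omega⟩

/-- `B` is a `(K', F', Z', S)` PDA with `K' = t`, `F' = Σ a_s·C(t,s)`,
`Z' = Σ a_s·C(t−1,s−1)`, `S = Σ a_s·C(t,s+1)`: (rows) `|R| = F'`; (C1) each of
the `t` columns contains exactly `Z'` stars; (C2) there are exactly `S` distinct
integer entries, each occurring (at least once, by definition of `IntEntries`);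
(C3) two distinct cells with the same integer entry lie in distinct rows and
distinct columns, and the two cross cells contain `⋆`. -/
theorem stmt9 (t : ℕ) (ht : 2 ≤ t) (a : ℕ → ℕ)
    (hnz : ∃ s ∈ Finset.Icc 1 (t - 1), a s ≠ 0) :
    (Rset t a).card = ∑ s ∈ Finset.Icc 1 (t - 1), a s * Nat.choose t s ∧
    (∀ j ∈ Finset.Icc 1 t,
      ((Rset t a).filter (fun p => Bent p j = none)).card =
        ∑ s ∈ Finset.Icc 1 (t - 1), a s * Nat.choose (t - 1) (s - 1)) ∧
    (IntEntries t a).card =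
      ∑ s ∈ Finset.Icc 1 (t - 1), a s * Nat.choose t (s + 1) ∧
    (∀ p ∈ Rset t a, ∀ p' ∈ Rset t a, ∀ j ∈ Finset.Icc 1 t, ∀ j' ∈ Finset.Icc 1 t,
      (p, j) ≠ (p', j') → ∀ e : Finset ℕ × ℕ,
        Bent p j = some e → Bent p' j' = some e →
          p ≠ p' ∧ j ≠ j' ∧ Bent p j' = none ∧ Bent p' j = none) := by
  have hcardIcc : (Finset.Icc 1 t).card = t := by rw [Nat.card_Icc]; omega
  refine ⟨?_, ?_, ?_, ?_⟩
  · rw [Rset, Finset.card_biUnion (rset_pairwise t a)]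
    refine Finset.sum_congr rfl fun s _ => ?_
    rw [Finset.card_product, Finset.card_powersetCard, hcardIcc, Nat.card_Icc,
      Nat.add_sub_cancel, Nat.mul_comm]
  · intro j hj
    have hBent : ∀ p : Finset ℕ × ℕ, (Bent p j = none) ↔ j ∈ p.1 := by
      intro p
      unfold Bent
      split <;> simp_all
    rw [Rset, Finset.filter_biUnion, Finset.card_biUnion
      (fun s hs s' hs' hss => Finset.disjoint_filter_filter (rset_pairwise t a s hs s' hs' hss))]
    refine Finset.sum_congr rfl fun s hs => ?_
    have hs1 : 1 ≤ s := (Finset.mem_Icc.1 hs).1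
    simp only [hBent]
    rw [Finset.filter_product_left (fun Y => j ∈ Y), Finset.card_product,
      count_contains (by exact hj) hs1, hcardIcc, Nat.card_Icc,
      Nat.add_sub_cancel, Nat.mul_comm]
  · rw [intEntries_eq t ht a, Finset.card_biUnion]
    · refine Finset.sum_congr rfl fun s _ => ?_
      rw [Finset.card_product, Finset.card_powersetCard, hcardIcc, Nat.card_Icc,
        Nat.add_sub_cancel, Nat.mul_comm]
    · intro s _ s' _ hss
      rw [Function.onFun, Finset.disjoint_left]
      rintro ⟨Z, i⟩ h1 h2
      rw [Finset.mem_product, mem_powersetCard] at h1 h2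
      have e1 := h1.1.2
      have e2 := h2.1.2
      omega
  · rintro p _ p' _ j _ j' _ hne e he he'
    unfold Bent at he he'
    rw [ite_eq_iff] at he he'
    rcases he with ⟨_, h⟩ | ⟨hjp, h⟩
    · exact absurd h (by simp)
    rcases he' with ⟨_, h'⟩ | ⟨hjp', h'⟩
    · exact absurd h' (by simp)
    have h := Option.some.inj h
    have h' := Option.some.inj h'
    have hee := h.trans h'.symm
    have hset : insert j p.1 = insert j' p'.1 := (Prod.ext_iff.1 hee).1
    have hsnd : p.2 = p'.2 := (Prod.ext_iff.1 hee).2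
    have hjj : j ≠ j' := by
      rintro rfl
      have hfst : p.1 = p'.1 := by
        have := congrArg (Finset.erase · j) hset
        simpa [Finset.erase_insert hjp, Finset.erase_insert hjp'] using this
      exact hne (by rw [Prod.ext_iff, Prod.ext_iff]; exact ⟨⟨hfst, hsnd⟩, rfl⟩)
    have hj'p : j' ∈ p.1 := by
      have : j' ∈ insert j p.1 := hset ▸ Finset.mem_insert_self j' p'.1
      rcases Finset.mem_insert.1 this with h | h
      · exact absurd h.symm hjj
      · exact h
    have hjp'' : j ∈ p'.1 := by
      have : j ∈ insert j' p'.1 := hset ▸ Finset.mem_insert_self j p.1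
      rcases Finset.mem_insert.1 this with h | h
      · exact absurd h hjj
      · exact h
    refine ⟨?_, hjj, ?_, ?_⟩
    · rintro rfl; exact hjp hjp''
    · unfold Bent; rw [if_pos hj'p]
    · unfold Bent; rw [if_pos hjp'']
end

section
/- Let (X, 𝒜) be a t-(v,k,λ) design with pairwise distinct blocks, let τ = {x_1, …, x_t} ⊆ X be a set of t points, and for each s ∈ {1,…,t−1} let a_s be an integer with 0 ≤ a_s ≤ λ_s^t, where λ_s^t = λ·C(v−t, k−s)/C(v−t, k−t). Let R = ⋃_{s=1}^{t−1} { (Y,i) : Y ⊆ [t], |Y| = s, i ∈ [a_s] }. Then there exists an injective map ψ : R → 𝒜 such that for every (Y,i) ∈ R, the block ψ((Y,i)) satisfies ψ((Y,i)) ∩ τ = { x_j : j ∈ Y }. -/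
open Finset

/-- `(X, 𝒜)` is a `t`-`(v, k, λ)` design with pairwise distinct blocks: `X` is a
set of `v` points, `𝒜` is a set of `k`-element subsets of `X` (blocks), with
`v > k ≥ t ≥ 1`, and every `t`-element subset of `X` is contained in exactly
`lam` blocks. -/
def IsDesignF {α : Type*} [DecidableEq α] (t v k lam : ℕ)
    (X : Finset α) (𝒜 : Finset (Finset α)) : Prop :=
  X.card = v ∧ k < v ∧ t ≤ k ∧ 1 ≤ t ∧
  (∀ A ∈ 𝒜, A ⊆ X ∧ A.card = k) ∧
  ∀ T : Finset α, T ⊆ X → T.card = t →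
    (𝒜.filter (fun A => T ⊆ A)).card = lam

section Aux

variable {α : Type*} [DecidableEq α]

lemma count_superset (t v k lam : ℕ) (X : Finset α) (𝒜 : Finset (Finset α))
    (hA : ∀ A ∈ 𝒜, A ⊆ X ∧ A.card = k)
    (hcount : ∀ T : Finset α, T ⊆ X → T.card = t →
      (𝒜.filter (fun A => T ⊆ A)).card = lam)
    (hXv : X.card = v)
    (S : Finset α) (hSX : S ⊆ X) (hst : S.card ≤ t) :
    (𝒜.filter (fun A => S ⊆ A)).card * Nat.choose (k - S.card) (t - S.card)
      = lam * Nat.choose (v - S.card) (t - S.card) := by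
  classical
  set s := S.card with hs
  set P := (X \ S).powersetCard (t - s) with hP
  set F := 𝒜.filter (fun A => S ⊆ A) with hF
  have h1 : ∀ A ∈ F, (P.filter (fun T => T ⊆ A)).card = Nat.choose (k - s) (t - s) := by
    intro A hA'
    rw [hF, mem_filter] at hA'
    obtain ⟨hAX, hAk⟩ := hA A hA'.1
    have heq : P.filter (fun T => T ⊆ A) = (A \ S).powersetCard (t - s) := by
      ext T
      simp only [hP, mem_filter, mem_powersetCard]
      constructor
      · rintro ⟨⟨hTXS, hTc⟩, hTA⟩
        exact ⟨fun y hy => mem_sdiff.mpr ⟨hTA hy, (mem_sdiff.mp (hTXS hy)).2⟩, hTc⟩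
      · rintro ⟨hTAS, hTc⟩
        refine ⟨⟨fun y hy => ?_, hTc⟩, fun y hy => (mem_sdiff.mp (hTAS hy)).1⟩
        have h := mem_sdiff.mp (hTAS hy)
        exact mem_sdiff.mpr ⟨hAX h.1, h.2⟩
    rw [heq, card_powersetCard, card_sdiff_of_subset hA'.2, hAk]
  have h2 : ∑ A ∈ F, (P.filter (fun T => T ⊆ A)).card
      = ∑ T ∈ P, (F.filter (fun A => T ⊆ A)).card := by
    simp_rw [card_filter]
    exact Finset.sum_comm
  have h3 : ∀ T ∈ P, (F.filter (fun A => T ⊆ A)).card = lam := by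
    intro T hT
    rw [hP, mem_powersetCard] at hT
    have hdisj : Disjoint S T :=
      (disjoint_of_subset_left hT.1 sdiff_disjoint).symm
    rw [hF, filter_filter]
    have heq : (𝒜.filter fun A => S ⊆ A ∧ T ⊆ A)
        = 𝒜.filter (fun A => S ∪ T ⊆ A) := by
      simp only [union_subset_iff]
    rw [heq]
    apply hcount
    · exact union_subset hSX (hT.1.trans sdiff_subset)
    · rw [card_union_of_disjoint hdisj, hT.2]
      omega
  calc F.card * Nat.choose (k - s) (t - s)
      = ∑ A ∈ F, Nat.choose (k - s) (t - s) := by rw [sum_const, smul_eq_mul]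
    _ = ∑ A ∈ F, (P.filter (fun T => T ⊆ A)).card := by
        exact (Finset.sum_congr rfl h1).symm
    _ = ∑ T ∈ P, (F.filter (fun A => T ⊆ A)).card := h2
    _ = ∑ T ∈ P, lam := Finset.sum_congr rfl h3
    _ = P.card * lam := by rw [sum_const, smul_eq_mul]
    _ = lam * Nat.choose (v - s) (t - s) := by
        rw [hP, card_powersetCard, card_sdiff_of_subset hSX, hXv, Nat.mul_comm]

lemma count_exact (t v k lam : ℕ) (X : Finset α) (𝒜 : Finset (Finset α))
    (hA : ∀ A ∈ 𝒜, A ⊆ X ∧ A.card = k)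
    (hcount : ∀ T : Finset α, T ⊆ X → T.card = t →
      (𝒜.filter (fun A => T ⊆ A)).card = lam)
    (hXv : X.card = v) (hkv : k < v) (htk : t ≤ k) :
    ∀ (d : ℕ) (S D : Finset α), S ⊆ X → D ⊆ X → Disjoint S D → D.card = d →
      S.card + d ≤ t →
      (𝒜.filter (fun A => S ⊆ A ∧ A ∩ D = ∅)).card * Nat.choose (v - t) (k - t)
        = lam * Nat.choose (v - S.card - d) (k - S.card) := by
  intro d
  induction d with
  | zero =>
    intro S D hSX hDX hdisj hDc hle
    have hD : D = ∅ := card_eq_zero.mp hDc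
    subst hD
    simp only [inter_empty, and_true, Nat.sub_zero]
    set s := S.card with hs
    have hst : s ≤ t := by omega
    have hbase := count_superset t v k lam X 𝒜 hA hcount hXv S hSX hst
    have hid : Nat.choose (v - s) (k - s) * Nat.choose (k - s) (t - s)
        = Nat.choose (v - s) (t - s) * Nat.choose (v - t) (k - t) := by
      have h := Nat.choose_mul (n := v - s) (k := k - s) (s := t - s)
        (by omega)
      rw [h]
      congr 1
      · congr 1 <;> omega
    have hpos : 0 < Nat.choose (k - s) (t - s) := Nat.choose_pos (by omega)
    apply Nat.eq_of_mul_eq_mul_right hpos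
    calc (𝒜.filter (fun A => S ⊆ A)).card * Nat.choose (v - t) (k - t)
          * Nat.choose (k - s) (t - s)
        = (𝒜.filter (fun A => S ⊆ A)).card * Nat.choose (k - s) (t - s)
          * Nat.choose (v - t) (k - t) := by ring
      _ = lam * Nat.choose (v - s) (t - s) * Nat.choose (v - t) (k - t) := by rw [hbase]
      _ = lam * (Nat.choose (v - s) (t - s) * Nat.choose (v - t) (k - t)) := by ring
      _ = lam * (Nat.choose (v - s) (k - s) * Nat.choose (k - s) (t - s)) := by rw [hid]
      _ = lam * Nat.choose (v - s) (k - s) * Nat.choose (k - s) (t - s) := by ring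
  | succ d ih =>
    intro S D hSX hDX hdisj hDc hle
    set s := S.card with hs
    have hne : D.Nonempty := card_pos.mp (by omega)
    obtain ⟨y, hy⟩ := hne
    set D' := D.erase y with hD'
    have hD'c : D'.card = d := by rw [hD', card_erase_of_mem hy]; omega
    have hyS : y ∉ S := fun h => (disjoint_left.mp hdisj h) hy
    have hyD' : y ∉ D' := notMem_erase y D
    have hD'X : D' ⊆ X := (erase_subset y D).trans hDX
    have hdisj' : Disjoint S D' := disjoint_of_subset_right (erase_subset y D) hdisj
    have hdisj2 : Disjoint (insert y S) D' := by
      rw [disjoint_insert_left]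
      exact ⟨hyD', hdisj'⟩
    have hins : (insert y S).card = s + 1 := card_insert_of_notMem hyS
    have hySX : insert y S ⊆ X := insert_subset (hDX hy) hSX
    -- split
    have hsplit :
        (𝒜.filter (fun A => S ⊆ A ∧ A ∩ D' = ∅)).card
          = (𝒜.filter (fun A => insert y S ⊆ A ∧ A ∩ D' = ∅)).card
            + (𝒜.filter (fun A => S ⊆ A ∧ A ∩ D = ∅)).card := by
      have h := Finset.card_filter_add_card_filter_not
        (s := 𝒜.filter (fun A => S ⊆ A ∧ A ∩ D' = ∅)) (p := fun A => y ∈ A)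
      rw [filter_filter, filter_filter] at h
      have e1 : (𝒜.filter fun A => (S ⊆ A ∧ A ∩ D' = ∅) ∧ y ∈ A)
          = 𝒜.filter (fun A => insert y S ⊆ A ∧ A ∩ D' = ∅) := by
        apply filter_congr
        intro A _
        rw [insert_subset_iff]
        tauto
      have e2 : (𝒜.filter fun A => (S ⊆ A ∧ A ∩ D' = ∅) ∧ ¬ y ∈ A)
          = 𝒜.filter (fun A => S ⊆ A ∧ A ∩ D = ∅) := by
        apply filter_congr
        intro A _
        simp only [eq_empty_iff_forall_notMem, mem_inter]
        constructor
        · rintro ⟨⟨h1, h2⟩, h3⟩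
          refine ⟨h1, fun z hz => ?_⟩
          rcases hz with ⟨hzA, hzD⟩
          rcases eq_or_ne z y with rfl | hne
          · exact h3 hzA
          · exact h2 z ⟨hzA, mem_erase.mpr ⟨hne, hzD⟩⟩
        · rintro ⟨h1, h2⟩
          refine ⟨⟨h1, fun z hz => ?_⟩, fun hyA => h2 y ⟨hyA, hy⟩⟩
          rcases hz with ⟨hzA, hzD'⟩
          exact h2 z ⟨hzA, (erase_subset y D) hzD'⟩
      rw [e1, e2] at h
      omega
    have IH1 := ih S D' hSX hD'X hdisj' hD'c (by omega)
    have IH2 := ih (insert y S) D' hySX hD'X hdisj2 hD'c (by rw [hins]; omega)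
    rw [hins] at IH2
    have e3 : v - (s + 1) - d = v - s - d - 1 := by omega
    have e4 : k - (s + 1) = k - s - 1 := by omega
    rw [e3, e4] at IH2
    have pascal : Nat.choose (v - s - d) (k - s)
        = Nat.choose (v - s - d - 1) (k - s - 1) + Nat.choose (v - s - d - 1) (k - s) := by
      obtain ⟨n, hn⟩ : ∃ n, v - s - d = n + 1 := ⟨v - s - d - 1, by omega⟩
      obtain ⟨m, hm⟩ : ∃ m, k - s = m + 1 := ⟨k - s - 1, by omega⟩
      rw [hn, hm, Nat.choose_succ_succ]
      simp
    have e5 : v - s - (d + 1) = v - s - d - 1 := by omega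
    rw [e5]
    -- combine
    have hsum : (𝒜.filter (fun A => insert y S ⊆ A ∧ A ∩ D' = ∅)).card
          * Nat.choose (v - t) (k - t)
        + (𝒜.filter (fun A => S ⊆ A ∧ A ∩ D = ∅)).card * Nat.choose (v - t) (k - t)
        = lam * Nat.choose (v - s - d - 1) (k - s - 1)
          + lam * Nat.choose (v - s - d - 1) (k - s) := by
      rw [← Nat.add_mul, ← hsplit, IH1, pascal, Nat.mul_add]
    rw [IH2] at hsum
    exact Nat.add_left_cancel hsum

end Aux

/-- Given a `t`-design with distinct blocks, a set `τ = {x₁, …, x_t}` of `t`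
points, and `0 ≤ a_s ≤ λ_s^t = λ·C(v−t,k−s)/C(v−t,k−t)` for `1 ≤ s ≤ t−1`, there
is an injective map `ψ : R → 𝒜` such that `ψ((Y,i)) ∩ τ = {x_j : j ∈ Y}`
for every `(Y,i) ∈ R`. -/


theorem stmt10 {α : Type*} [DecidableEq α] (t v k lam : ℕ)
    (X : Finset α) (𝒜 : Finset (Finset α))
    (hdes : IsDesignF t v k lam X 𝒜)
    (a : ℕ → ℕ)
    (ha : ∀ s ∈ Finset.Icc 1 (t - 1),
      a s ≤ lam * Nat.choose (v - t) (k - s) / Nat.choose (v - t) (k - t))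
    (x : ℕ → α) (hxinj : Set.InjOn x ↑(Finset.Icc 1 t))
    (hxX : ∀ j ∈ Finset.Icc 1 t, x j ∈ X) :
    ∃ ψ : Finset ℕ × ℕ → Finset α,
      Set.InjOn ψ ↑(Rset t a) ∧
      ∀ p ∈ Rset t a, ψ p ∈ 𝒜 ∧
        ψ p ∩ ((Finset.Icc 1 t).image x) = p.1.image x := by
  classical
  obtain ⟨hXv, hkv, htk, h1t, hA, hcount⟩ := hdes
  set τ := (Finset.Icc 1 t).image x with hτ
  have hτX : τ ⊆ X := by
    intro z hz
    obtain ⟨j, hj, rfl⟩ := mem_image.mp hz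
    exact hxX j hj
  have hτcard : τ.card = t := by
    rw [hτ, card_image_of_injOn hxinj, Nat.card_Icc]
    omega
  -- key counting fact
  have key : ∀ Y : Finset ℕ, Y ⊆ Finset.Icc 1 t → 1 ≤ Y.card → Y.card ≤ t - 1 →
      a Y.card ≤ (𝒜.filter (fun A => A ∩ τ = Y.image x)).card := by
    intro Y hY h1 h2
    set S := Y.image x with hS
    have hScard : S.card = Y.card :=
      card_image_of_injOn (hxinj.mono (by exact_mod_cast hY))
    set s := Y.card with hsdef
    have hSτ : S ⊆ τ := image_subset_image hY
    set D := τ \ S with hD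
    have hDcard : D.card = t - s := by
      rw [hD, card_sdiff_of_subset hSτ, hτcard, hScard]
    have hdisj : Disjoint S D := disjoint_sdiff
    have hfilter : 𝒜.filter (fun A => A ∩ τ = S)
        = 𝒜.filter (fun A => S ⊆ A ∧ A ∩ D = ∅) := by
      apply filter_congr
      intro A _
      constructor
      · intro h
        constructor
        · intro z hz
          rw [← h] at hz
          exact (mem_inter.mp hz).1
        · rw [eq_empty_iff_forall_notMem]
          intro z hz
          rw [mem_inter, hD, mem_sdiff] at hz
          obtain ⟨hzA, hzτ, hzS⟩ := hz
          exact hzS (h ▸ mem_inter.mpr ⟨hzA, hzτ⟩)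
      · rintro ⟨h1', h2'⟩
        ext z
        rw [mem_inter]
        constructor
        · rintro ⟨hzA, hzτ⟩
          by_contra hzS
          have : z ∈ A ∩ D := mem_inter.mpr ⟨hzA, by rw [hD, mem_sdiff]; exact ⟨hzτ, hzS⟩⟩
          rw [h2'] at this
          exact notMem_empty z this
        · intro hzS
          exact ⟨h1' hzS, hSτ hzS⟩
    have hexact := count_exact t v k lam X 𝒜 hA hcount hXv hkv htk (t - s) S D
      (hSτ.trans hτX) (sdiff_subset.trans hτX) hdisj hDcard (by rw [hScard]; omega)
    rw [hScard] at hexact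
    have e6 : v - s - (t - s) = v - t := by omega
    rw [e6] at hexact
    have hCpos : 0 < Nat.choose (v - t) (k - t) := Nat.choose_pos (by omega)
    have hdiv : lam * Nat.choose (v - t) (k - s) / Nat.choose (v - t) (k - t)
        = (𝒜.filter (fun A => S ⊆ A ∧ A ∩ D = ∅)).card := by
      rw [← hexact, Nat.mul_div_cancel _ hCpos]
    have := ha s (by rw [Finset.mem_Icc]; omega)
    rw [hfilter]
    omega
  -- helper: injectivity of image
  have himg : ∀ Y₁ Y₂ : Finset ℕ, Y₁ ⊆ Finset.Icc 1 t → Y₂ ⊆ Finset.Icc 1 t →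
      Y₁.image x = Y₂.image x → Y₁ = Y₂ := by
    intro Y1 Y2 hY1 hY2 h
    ext j
    constructor <;> intro hj
    · have hx : x j ∈ Y2.image x := h ▸ mem_image_of_mem x hj
      obtain ⟨j', hj', he⟩ := mem_image.mp hx
      rwa [← hxinj (by exact_mod_cast hY2 hj') (by exact_mod_cast hY1 hj) he]
    · have hx : x j ∈ Y1.image x := h ▸ mem_image_of_mem x hj
      obtain ⟨j', hj', he⟩ := mem_image.mp hx
      rwa [← hxinj (by exact_mod_cast hY1 hj') (by exact_mod_cast hY2 hj) he]
  -- membership unpacking for Rset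
  have hmem : ∀ p ∈ Rset t a, p.1 ⊆ Finset.Icc 1 t ∧ 1 ≤ p.1.card ∧
      p.1.card ≤ t - 1 ∧ 1 ≤ p.2 ∧ p.2 ≤ a p.1.card := by
    intro p hp
    rw [Rset, Finset.mem_biUnion] at hp
    obtain ⟨s, hs, hps⟩ := hp
    rw [Finset.mem_product, Finset.mem_powersetCard, Finset.mem_Icc] at hps
    rw [Finset.mem_Icc] at hs
    obtain ⟨⟨hsub, hcard⟩, hi⟩ := hps
    refine ⟨hsub, ?_, ?_, hi.1, ?_⟩ <;> rw [hcard] <;> omega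
  refine ⟨fun p => (𝒜.filter (fun A => A ∩ τ = p.1.image x)).toList.getD (p.2 - 1) ∅, ?_, ?_⟩
  · -- injective
    rintro ⟨Y, i⟩ hp ⟨Z, j⟩ hq hpq
    rw [mem_coe] at hp hq
    set p : Finset ℕ × ℕ := (Y, i) with hpdef
    set q : Finset ℕ × ℕ := (Z, j) with hqdef
    obtain ⟨hp1, hp2, hp3, hp4, hp5⟩ := hmem p hp
    obtain ⟨hq1, hq2, hq3, hq4, hq5⟩ := hmem q hq
    have hlp : p.2 - 1 < (𝒜.filter (fun A => A ∩ τ = p.1.image x)).toList.length := by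
      rw [Finset.length_toList]
      have := key p.1 hp1 hp2 hp3
      omega
    have hlq : q.2 - 1 < (𝒜.filter (fun A => A ∩ τ = q.1.image x)).toList.length := by
      rw [Finset.length_toList]
      have := key q.1 hq1 hq2 hq3
      omega
    simp only at hpq
    rw [List.getD_eq_getElem _ _ hlp, List.getD_eq_getElem _ _ hlq] at hpq
    have hpA : (𝒜.filter (fun A => A ∩ τ = p.1.image x)).toList[p.2-1]
        ∈ 𝒜.filter (fun A => A ∩ τ = p.1.image x) := by
      rw [← Finset.mem_toList]
      exact List.getElem_mem hlp
    have hqA : (𝒜.filter (fun A => A ∩ τ = q.1.image x)).toList[q.2-1]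
        ∈ 𝒜.filter (fun A => A ∩ τ = q.1.image x) := by
      rw [← Finset.mem_toList]
      exact List.getElem_mem hlq
    rw [mem_filter] at hpA hqA
    have hYeq : Y = Z := by
      apply himg _ _ hp1 hq1
      rw [← hpA.2, ← hqA.2, hpq]
    subst hYeq
    have hieq : i = j := by
      have := (Finset.nodup_toList _).getElem_inj_iff.mp hpq
      simp only [hpdef, hqdef] at this hp4 hq4
      omega
    subst hieq
    rfl
  · -- membership and intersection
    intro p hp
    obtain ⟨hp1, hp2, hp3, hp4, hp5⟩ := hmem p hp
    have hlp : p.2 - 1 < (𝒜.filter (fun A => A ∩ τ = p.1.image x)).toList.length := by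
      rw [Finset.length_toList]
      have := key p.1 hp1 hp2 hp3
      omega
    have hpA : (𝒜.filter (fun A => A ∩ τ = p.1.image x)).toList.getD (p.2 - 1) ∅
        ∈ 𝒜.filter (fun A => A ∩ τ = p.1.image x) := by
      rw [List.getD_eq_getElem _ _ hlp, ← Finset.mem_toList]
      exact List.getElem_mem hlp
    rw [mem_filter] at hpA
    exact ⟨hpA.1, hpA.2⟩
end

section
/- Let (X, 𝒜) be a t-(v,k,λ) design with b pairwise distinct blocks, fix an integer t ≥ 2, and for each s ∈ {1,…,t−1} let a_s be an integer with 0 ≤ a_s ≤ λ_s^t = λ·C(v−t, k−s)/C(v−t, k−t), not all zero. Let P be the b×v array with rows indexed by the blocks A ∈ 𝒜 and columns indexed by the points x ∈ X, with P_{A,x} = ⋆ if x ∈ A and P_{A,x} = null otherwise, and let B be the array on R×[t]. Then (P, B) is a (K, K', F, F', Z, Z', S) hotplug placement delivery array with K = v, K' = t, F = b, F' = Σ_{s=1}^{t−1} a_s·C(t,s), Z = λ_1 = λ·C(v−1,t−1)/C(k−1,t−1), Z' = Σ_{s=1}^{t−1} a_s·C(t−1,s−1) and S = Σ_{s=1}^{t−1}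 a_s·C(t,s+1): each column of P contains exactly Z stars; B is a (K', F', Z', S) placement delivery array; and for every τ ⊆ X with |τ| = t there exist a subset ζ ⊆ 𝒜 with |ζ| = F' and bijections from ζ to R and from τ to [t] under which the subarray of P on rows ζ and columns τ has stars in exactly the same positions as B. -/
open Finset

lemma card_powersetCard_filter {β : Type*} [DecidableEq β]
    (s I : Finset β) (n : ℕ) (hI : I ⊆ s) (hn : I.card ≤ n) :
    ((s.powersetCard n).filter (fun T => I ⊆ T)).card
      = (s.card - I.card).choose (n - I.card) := by
  rw [← Finset.card_sdiff_of_subset hI, ← Finset.card_powersetCard (n - I.card) (s \ I)]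
  apply Finset.card_bij' (fun T _ => T \ I) (fun U _ => U ∪ I)
  · intro T hT
    simp only [Finset.mem_filter, Finset.mem_powersetCard] at hT
    obtain ⟨⟨hTs, hTc⟩, hIT⟩ := hT
    rw [Finset.mem_powersetCard]
    exact ⟨Finset.sdiff_subset_sdiff hTs (Finset.Subset.refl I),
      by rw [Finset.card_sdiff_of_subset hIT, hTc]⟩
  · intro U hU
    rw [Finset.mem_powersetCard] at hU
    obtain ⟨hUs, hUc⟩ := hU
    have hdisj : Disjoint U I := Finset.disjoint_of_subset_left hUs (Finset.sdiff_disjoint)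
    simp only [Finset.mem_filter, Finset.mem_powersetCard]
    refine ⟨⟨Finset.union_subset (hUs.trans Finset.sdiff_subset) hI, ?_⟩,
      Finset.subset_union_right⟩
    rw [Finset.card_union_of_disjoint hdisj, hUc]
    omega
  · intro T hT
    simp only [Finset.mem_filter] at hT
    exact Finset.sdiff_union_of_subset hT.2
  · intro U hU
    rw [Finset.mem_powersetCard] at hU
    have hdisj : Disjoint U I := Finset.disjoint_of_subset_left hU.1 (Finset.sdiff_disjoint)
    rw [Finset.union_sdiff_right, Finset.sdiff_eq_self_iff_disjoint.2 hdisj]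

lemma design_lam_i {α : Type*} [DecidableEq α] {t v k lam : ℕ} {X : Finset α}
    {𝒜 : Finset (Finset α)} (hdes : IsDesignF t v k lam X 𝒜)
    (I : Finset α) (hIX : I ⊆ X) (hIt : I.card ≤ t) :
    (𝒜.filter (fun A => I ⊆ A)).card * (k - I.card).choose (t - I.card)
      = lam * (v - I.card).choose (t - I.card) := by
  obtain ⟨hX, hkv, htk, ht1, hblocks, hlam⟩ := hdes
  set 𝒯 := (X.powersetCard t).filter (fun T => I ⊆ T) with h𝒯
  have key : ∑ A ∈ 𝒜, ((𝒯.filter (fun T => T ⊆ A)).card)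
      = ∑ T ∈ 𝒯, ((𝒜.filter (fun A => T ⊆ A)).card) := by
    simp only [Finset.card_filter]
    rw [Finset.sum_comm]
  have hR : ∑ T ∈ 𝒯, ((𝒜.filter (fun A => T ⊆ A)).card)
      = lam * (v - I.card).choose (t - I.card) := by
    rw [Finset.sum_congr rfl (fun T hT => ?_), Finset.sum_const, smul_eq_mul]
    · rw [h𝒯, card_powersetCard_filter X I t hIX hIt, hX, mul_comm]
    · simp only [h𝒯, Finset.mem_filter, Finset.mem_powersetCard] at hT
      exact hlam T hT.1.1 hT.1.2
  have hL : ∑ A ∈ 𝒜, ((𝒯.filter (fun T => T ⊆ A)).card)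
      = (𝒜.filter (fun A => I ⊆ A)).card * (k - I.card).choose (t - I.card) := by
    have hterm : ∀ A ∈ 𝒜, (𝒯.filter (fun T => T ⊆ A)).card
        = if I ⊆ A then (k - I.card).choose (t - I.card) else 0 := by
      intro A hA
      obtain ⟨hAX, hAk⟩ := hblocks A hA
      by_cases hIA : I ⊆ A
      · rw [if_pos hIA]
        have : 𝒯.filter (fun T => T ⊆ A) = (A.powersetCard t).filter (fun T => I ⊆ T) := by
          ext T
          simp only [h𝒯, Finset.mem_filter, Finset.mem_powersetCard]
          constructor
          · rintro ⟨⟨⟨hTX, hTt⟩, hIT⟩, hTA⟩; exact ⟨⟨hTA, hTt⟩, hIT⟩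
          · rintro ⟨⟨hTA, hTt⟩, hIT⟩; exact ⟨⟨⟨hTA.trans hAX, hTt⟩, hIT⟩, hTA⟩
        rw [this, card_powersetCard_filter A I t hIA hIt, hAk]
      · rw [if_neg hIA]
        rw [Finset.card_eq_zero, Finset.filter_eq_empty_iff]
        intro T hT
        simp only [h𝒯, Finset.mem_filter] at hT
        exact fun hTA => hIA (hT.2.trans hTA)
    rw [Finset.sum_congr rfl hterm, ← Finset.sum_filter, Finset.sum_const, smul_eq_mul]
  rw [← hL, key, hR]

lemma design_lam_ij {α : Type*} [DecidableEq α] {t v k lam : ℕ} {X : Finset α}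
    {𝒜 : Finset (Finset α)} (hdes : IsDesignF t v k lam X 𝒜) :
    ∀ (J I : Finset α), I ⊆ X → J ⊆ X → Disjoint I J → I.card + J.card ≤ t →
    (𝒜.filter (fun A => I ⊆ A ∧ Disjoint A J)).card * (v - t).choose (k - t)
      = lam * (v - I.card - J.card).choose (k - I.card) := by
  obtain ⟨hX, hkv, htk, ht1, hblocks, hlam⟩ := hdes
  intro J
  induction J using Finset.induction_on with
  | empty =>
    intro I hIX _ _ hcard
    simp only [Finset.card_empty, add_zero, Nat.sub_zero] at *
    have hfe : 𝒜.filter (fun A => I ⊆ A ∧ Disjoint A (∅ : Finset α))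
        = 𝒜.filter (fun A => I ⊆ A) := by
      apply Finset.filter_congr; intro A _; simp
    rw [hfe]
    have h1 := design_lam_i ⟨hX, hkv, htk, ht1, hblocks, hlam⟩ I hIX (by omega)
    have hpos : 0 < (k - I.card).choose (t - I.card) := Nat.choose_pos (by omega)
    apply Nat.eq_of_mul_eq_mul_right hpos
    have id1 : (v - I.card).choose (k - I.card) * (k - I.card).choose (t - I.card)
        = (v - I.card).choose (t - I.card) * (v - t).choose (k - t) := by
      rw [Nat.choose_mul (n := v - I.card)
        (show t - I.card ≤ k - I.card by omega)]
      congr 2 <;> omega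
    calc (𝒜.filter (fun A => I ⊆ A)).card * (v - t).choose (k - t)
          * (k - I.card).choose (t - I.card)
        = ((𝒜.filter (fun A => I ⊆ A)).card * (k - I.card).choose (t - I.card))
          * (v - t).choose (k - t) := by ring
      _ = (lam * (v - I.card).choose (t - I.card)) * (v - t).choose (k - t) := by rw [h1]
      _ = lam * ((v - I.card).choose (t - I.card) * (v - t).choose (k - t)) := by ring
      _ = lam * ((v - I.card).choose (k - I.card) * (k - I.card).choose (t - I.card)) := by
          rw [← id1]
      _ = lam * (v - I.card).choose (k - I.card) * (k - I.card).choose (t - I.card) := by ring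
  | @insert x J hx ih =>
    intro I hIX hJX hdisj hcard
    have hxX : x ∈ X := hJX (Finset.mem_insert_self x J)
    have hJX' : J ⊆ X := (Finset.subset_insert x J).trans hJX
    have hxI : x ∉ I := (Finset.disjoint_insert_right.1 hdisj).1
    have hdIJ : Disjoint I J := (Finset.disjoint_insert_right.1 hdisj).2
    have hcJ : (insert x J).card = J.card + 1 := Finset.card_insert_of_notMem hx
    have hcI : (insert x I).card = I.card + 1 := Finset.card_insert_of_notMem hxI
    have hsplit : (𝒜.filter (fun A => insert x I ⊆ A ∧ Disjoint A J)).card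
        + (𝒜.filter (fun A => I ⊆ A ∧ Disjoint A (insert x J))).card
        = (𝒜.filter (fun A => I ⊆ A ∧ Disjoint A J)).card := by
      have eA : 𝒜.filter (fun A => (I ⊆ A ∧ Disjoint A J) ∧ x ∈ A)
          = 𝒜.filter (fun A => insert x I ⊆ A ∧ Disjoint A J) :=
        Finset.filter_congr (by intro A _; simp only [Finset.insert_subset_iff]; tauto)
      have eB : 𝒜.filter (fun A => (I ⊆ A ∧ Disjoint A J) ∧ ¬ x ∈ A)
          = 𝒜.filter (fun A => I ⊆ A ∧ Disjoint A (insert x J)) :=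
        Finset.filter_congr (by intro A _; simp only [Finset.disjoint_insert_right]; tauto)
      have hkey := Finset.card_filter_add_card_filter_not
        (s := 𝒜.filter (fun A => I ⊆ A ∧ Disjoint A J)) (p := fun A => x ∈ A)
      rw [Finset.filter_filter, Finset.filter_filter, eA, eB] at hkey
      exact hkey
    have h1 := ih I hIX hJX' hdIJ (by omega)
    have h2 := ih (insert x I) (Finset.insert_subset hxX hIX)
      hJX' (Finset.disjoint_insert_left.2 ⟨hx, hdIJ⟩) (by rw [hcI]; omega)
    rw [hcI] at h2
    have hp : (v - I.card - J.card).choose (k - I.card)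
        = (v - (I.card + 1) - J.card).choose (k - (I.card + 1))
          + (v - I.card - (insert x J).card).choose (k - I.card) := by
      have hJXcard : J.card ≤ X.card := Finset.card_le_card hJX'
      have hIXcard : I.card ≤ X.card := Finset.card_le_card hIX
      have e1 : v - I.card - J.card = (v - (I.card + 1) - J.card) + 1 := by omega
      have e2 : k - I.card = (k - (I.card + 1)) + 1 := by omega
      rw [e1, e2, Nat.choose_succ_succ]
      congr 2 <;> omega
    have hcomb : (𝒜.filter (fun A => insert x I ⊆ A ∧ Disjoint A J)).card
          * (v - t).choose (k - t)
        + (𝒜.filter (fun A => I ⊆ A ∧ Disjoint A (insert x J))).card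
          * (v - t).choose (k - t)
        = lam * (v - (I.card + 1) - J.card).choose (k - (I.card + 1))
          + lam * (v - I.card - (insert x J).card).choose (k - I.card) := by
      rw [← Nat.add_mul, hsplit, h1, hp, Nat.mul_add]
    rw [h2] at hcomb
    exact Nat.add_left_cancel hcomb

lemma hdisjR (t : ℕ) (a : ℕ → ℕ) :
    ∀ s1 ∈ Finset.Icc 1 (t-1), ∀ s2 ∈ Finset.Icc 1 (t-1), s1 ≠ s2 →
    Disjoint ((Finset.powersetCard s1 (Finset.Icc 1 t)) ×ˢ (Finset.Icc 1 (a s1)))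
      ((Finset.powersetCard s2 (Finset.Icc 1 t)) ×ˢ (Finset.Icc 1 (a s2))) := by
  intro s1 _ s2 _ hne
  rw [Finset.disjoint_left]
  rintro ⟨Y, i⟩ h1 h2
  simp only [Finset.mem_product, Finset.mem_powersetCard] at h1 h2
  exact hne (h1.1.2 ▸ h2.1.2)

lemma Rset_card (t : ℕ) (a : ℕ → ℕ) :
    (Rset t a).card = ∑ s ∈ Finset.Icc 1 (t - 1), a s * Nat.choose t s := by
  rw [Rset, Finset.card_biUnion (hdisjR t a)]
  refine Finset.sum_congr rfl fun s _ => ?_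
  rw [Finset.card_product, Finset.card_powersetCard, Nat.card_Icc, Nat.card_Icc]
  simp [mul_comm]

lemma Rset_mem {t : ℕ} {a : ℕ → ℕ} {p : Finset ℕ × ℕ} (hp : p ∈ Rset t a) :
    p.1 ⊆ Finset.Icc 1 t ∧ 1 ≤ p.1.card ∧ p.1.card ≤ t - 1 ∧
    1 ≤ p.2 ∧ p.2 ≤ a p.1.card := by
  simp only [Rset, Finset.mem_biUnion, Finset.mem_product, Finset.mem_powersetCard,
    Finset.mem_Icc] at hp
  obtain ⟨s, ⟨hs1, hs2⟩, ⟨hsub, hcard⟩, hi1, hi2⟩ := hp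
  rw [← hcard] at hs1 hs2 hi2
  exact ⟨hsub, hs1, hs2, hi1, hi2⟩

lemma Bent_none_iff (p : Finset ℕ × ℕ) (j : ℕ) : Bent p j = none ↔ j ∈ p.1 := by
  unfold Bent; split <;> simp_all

lemma Rset_col_stars {t : ℕ} (a : ℕ → ℕ) {j : ℕ} (hj : j ∈ Finset.Icc 1 t) :
    ((Rset t a).filter (fun p => Bent p j = none)).card =
      ∑ s ∈ Finset.Icc 1 (t - 1), a s * Nat.choose (t - 1) (s - 1) := by
  rw [Rset, Finset.filter_biUnion]
  rw [Finset.card_biUnion (fun s1 h1 s2 h2 hne =>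
    Finset.disjoint_filter_filter (hdisjR t a s1 h1 s2 h2 hne))]
  refine Finset.sum_congr rfl fun s hs => ?_
  have hfe : ((Finset.powersetCard s (Finset.Icc 1 t)) ×ˢ (Finset.Icc 1 (a s))).filter
        (fun p => Bent p j = none)
      = ((Finset.powersetCard s (Finset.Icc 1 t)).filter (fun Y => ({j} : Finset ℕ) ⊆ Y))
        ×ˢ (Finset.Icc 1 (a s)) := by
    ext ⟨Y, i⟩
    simp only [Finset.mem_filter, Finset.mem_product, Bent_none_iff,
      Finset.singleton_subset_iff]
    tauto
  rw [hfe, Finset.card_product, card_powersetCard_filter _ _ _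
    (by simpa using hj) (by simp; exact (Finset.mem_Icc.1 hs).1)]
  rw [Nat.card_Icc, Nat.card_Icc, Finset.card_singleton]
  simp [mul_comm]

lemma IntEntries_card (t : ℕ) (a : ℕ → ℕ) (ht : 2 ≤ t) :
    (IntEntries t a).card = ∑ s ∈ Finset.Icc 1 (t - 1), a s * Nat.choose t (s + 1) := by
  have hIE : IntEntries t a = (Finset.Icc 1 (t-1)).biUnion
      (fun s => (Finset.powersetCard (s+1) (Finset.Icc 1 t)) ×ˢ (Finset.Icc 1 (a s))) := by
    ext ⟨Z, i⟩
    constructor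
    · intro h
      obtain ⟨q, hq, heq⟩ := Finset.mem_image.1 h
      obtain ⟨hqm, hq2⟩ := Finset.mem_filter.1 hq
      obtain ⟨hpR, hjt⟩ := Finset.mem_product.1 hqm
      obtain ⟨hsub, hs1, hs2, hi1, hi2⟩ := Rset_mem hpR
      have hZ : insert q.2 q.1.1 = Z := congrArg Prod.fst heq
      have hi : q.1.2 = i := congrArg Prod.snd heq
      rw [Finset.mem_biUnion]
      refine ⟨q.1.1.card, Finset.mem_Icc.2 ⟨hs1, hs2⟩, ?_⟩
      rw [Finset.mem_product, Finset.mem_powersetCard]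
      refine ⟨⟨?_, ?_⟩, ?_⟩
      · rw [← hZ]; exact Finset.insert_subset hjt hsub
      · rw [← hZ, Finset.card_insert_of_notMem hq2]
      · rw [Finset.mem_Icc, ← hi]; exact ⟨hi1, hi2⟩
    · intro h
      rw [Finset.mem_biUnion] at h
      obtain ⟨s, hs, hmem⟩ := h
      rw [Finset.mem_product, Finset.mem_powersetCard] at hmem
      obtain ⟨⟨hZsub, hZcard⟩, hi⟩ := hmem
      dsimp only at hZsub hZcard hi
      rw [Finset.mem_Icc] at hs
      have hZne : Z.Nonempty := Finset.card_pos.1 (by omega)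
      obtain ⟨j, hjZ⟩ := hZne
      rw [IntEntries, Finset.mem_image]
      refine ⟨((Z.erase j, i), j), ?_, ?_⟩
      · rw [Finset.mem_filter, Finset.mem_product]
        refine ⟨⟨?_, hZsub hjZ⟩, Finset.notMem_erase j Z⟩
        rw [Rset, Finset.mem_biUnion]
        refine ⟨s, Finset.mem_Icc.2 ⟨hs.1, hs.2⟩, ?_⟩
        rw [Finset.mem_product, Finset.mem_powersetCard]
        refine ⟨⟨(Finset.erase_subset j Z).trans hZsub, ?_⟩, hi⟩
        rw [Finset.card_erase_of_mem hjZ, hZcard]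
        omega
      · simp [Finset.insert_erase hjZ]
  rw [hIE, Finset.card_biUnion]
  · refine Finset.sum_congr rfl fun s _ => ?_
    rw [Finset.card_product, Finset.card_powersetCard, Nat.card_Icc, Nat.card_Icc]
    simp [mul_comm]
  · intro s1 _ s2 _ hne
    rw [Function.onFun, Finset.disjoint_left]
    rintro ⟨Y, i⟩ h1 h2
    simp only [Finset.mem_product, Finset.mem_powersetCard] at h1 h2
    have := h1.1.2 ▸ h2.1.2
    omega

lemma C3 (p p' : Finset ℕ × ℕ) (j j' : ℕ) (hne : (p, j) ≠ (p', j'))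
    (e : Finset ℕ × ℕ) (he : Bent p j = some e) (he' : Bent p' j' = some e) :
    p ≠ p' ∧ j ≠ j' ∧ Bent p j' = none ∧ Bent p' j = none := by
  by_cases h1 : j ∈ p.1
  · simp [Bent, h1] at he
  by_cases h2 : j' ∈ p'.1
  · simp [Bent, h2] at he'
  simp only [Bent, if_neg h1] at he
  simp only [Bent, if_neg h2] at he'
  rw [← he'] at he
  obtain ⟨hY, hi⟩ : insert j p.1 = insert j' p'.1 ∧ p.2 = p'.2 := by
    simpa [Prod.ext_iff] using he
  have hjj' : j ≠ j' := by
    intro h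
    subst h
    have hfst : p.1 = p'.1 := by
      rw [← Finset.erase_insert h1, ← Finset.erase_insert h2, hY]
    exact hne (by rw [Prod.ext_iff]; exact ⟨Prod.ext hfst hi, rfl⟩)
  have hj'p : j' ∈ p.1 := by
    have : j' ∈ insert j p.1 := by rw [hY]; exact Finset.mem_insert_self j' p'.1
    rcases Finset.mem_insert.1 this with h | h
    · exact absurd h hjj'.symm
    · exact h
  have hjp' : j ∈ p'.1 := by
    have : j ∈ insert j' p'.1 := by rw [← hY]; exact Finset.mem_insert_self j p.1
    rcases Finset.mem_insert.1 this with h | h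
    · exact absurd h hjj'
    · exact h
  refine ⟨?_, hjj', by simp [Bent, hj'p], by simp [Bent, hjp']⟩
  intro h
  rw [h] at h1
  exact h1 hjp'

lemma hotplug {α : Type*} [DecidableEq α] {t v k lam : ℕ} {X : Finset α}
    {𝒜 : Finset (Finset α)} (hdes : IsDesignF t v k lam X 𝒜) (ht : 2 ≤ t) (a : ℕ → ℕ)
    (ha : ∀ s ∈ Finset.Icc 1 (t - 1),
      a s ≤ lam * Nat.choose (v - t) (k - s) / Nat.choose (v - t) (k - t))
    (τ : Finset α) (hτX : τ ⊆ X) (hτt : τ.card = t) :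
    ∃ ζ : Finset (Finset α), ζ ⊆ 𝒜 ∧
      ζ.card = ∑ s ∈ Finset.Icc 1 (t - 1), a s * Nat.choose t s ∧
      ∃ (ρ : Finset α → Finset ℕ × ℕ) (σ : α → ℕ),
        Set.BijOn ρ ↑ζ ↑(Rset t a) ∧ Set.BijOn σ ↑τ ↑(Finset.Icc 1 t) ∧
        ∀ A ∈ ζ, ∀ y ∈ τ, (y ∈ A ↔ σ y ∈ (ρ A).1) := by
  classical
  obtain ⟨hX, hkv, htk, ht1, hblocks, hlam⟩ := hdes
  have getD_lt : ∀ (l : List (Finset α)) (n : ℕ) (h : n < l.length), l.getD n ∅ = l[n]'h := by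
    intro l n h
    rw [List.getD_eq_getElem?_getD, List.getElem?_eq_getElem h]
    rfl
  have hcardτ : τ.card = (Finset.Icc 1 t).card := by
    rw [hτt, Nat.card_Icc]
    omega
  let e : {x // x ∈ τ} ≃ {x // x ∈ Finset.Icc 1 t} := Finset.equivOfCardEq hcardτ
  let σ : α → ℕ := fun y => if h : y ∈ τ then (e ⟨y, h⟩ : ℕ) else 0
  have hσval : ∀ y (hy : y ∈ τ), σ y = (e ⟨y, hy⟩ : ℕ) := fun y hy => dif_pos hy
  have hσmem : ∀ y ∈ τ, σ y ∈ Finset.Icc 1 t := by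
    intro y hy
    rw [hσval y hy]
    exact (e ⟨y, hy⟩).2
  have hσinj : Set.InjOn σ ↑τ := by
    intro y1 h1 y2 h2 heq
    rw [hσval y1 h1, hσval y2 h2] at heq
    have := e.injective (Subtype.ext heq)
    exact congrArg Subtype.val this
  have hσsurj : ∀ j ∈ Finset.Icc 1 t, ∃ y ∈ τ, σ y = j := by
    intro j hj
    refine ⟨(e.symm ⟨j, hj⟩ : α), (e.symm ⟨j, hj⟩).2, ?_⟩
    rw [hσval _ (e.symm ⟨j, hj⟩).2]
    exact congrArg Subtype.val (e.apply_symm_apply ⟨j, hj⟩)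
  have hσbij : Set.BijOn σ ↑τ ↑(Finset.Icc 1 t) := by
    refine ⟨fun y hy => hσmem y hy, hσinj, fun j hj => ?_⟩
    obtain ⟨y, hy, hyj⟩ := hσsurj j (Finset.mem_coe.1 hj)
    exact ⟨y, hy, hyj⟩
  let BY : Finset ℕ → Finset (Finset α) :=
    fun Y => 𝒜.filter (fun A => ∀ y ∈ τ, (y ∈ A ↔ σ y ∈ Y))
  have hBYbound : ∀ Y : Finset ℕ, Y ⊆ Finset.Icc 1 t → 1 ≤ Y.card → Y.card ≤ t - 1 →
      a Y.card ≤ (BY Y).card := by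
    intro Y hY h1 h2
    set I : Finset α := τ.filter (fun y => σ y ∈ Y) with hIdef
    have hIτ : I ⊆ τ := Finset.filter_subset _ _
    have himg : Finset.image σ I = Y := by
      ext j
      simp only [Finset.mem_image]
      constructor
      · rintro ⟨y, hyI, rfl⟩
        exact (Finset.mem_filter.1 hyI).2
      · intro hjY
        obtain ⟨y, hyτ, rfl⟩ := hσsurj j (hY hjY)
        exact ⟨y, Finset.mem_filter.2 ⟨hyτ, hjY⟩, rfl⟩
    have hIcard : I.card = Y.card := by
      rw [← himg, Finset.card_image_of_injOn (hσinj.mono (Finset.coe_subset.2 hIτ))]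
    have hJcard : (τ \ I).card = t - Y.card := by
      rw [Finset.card_sdiff_of_subset hIτ, hτt, hIcard]
    have hfe : BY Y = 𝒜.filter (fun A => I ⊆ A ∧ Disjoint A (τ \ I)) := by
      apply Finset.filter_congr
      intro A _
      constructor
      · intro h
        refine ⟨fun y hyI => (h y (hIτ hyI)).2 (Finset.mem_filter.1 hyI).2, ?_⟩
        rw [Finset.disjoint_left]
        intro y hyA hyd
        obtain ⟨hyτ, hyI⟩ := Finset.mem_sdiff.1 hyd
        exact hyI (Finset.mem_filter.2 ⟨hyτ, (h y hyτ).1 hyA⟩)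
      · rintro ⟨hIA, hdisj⟩ y hyτ
        constructor
        · intro hyA
          by_contra hσy
          exact (Finset.disjoint_left.1 hdisj hyA)
            (Finset.mem_sdiff.2 ⟨hyτ, fun hyI => hσy (Finset.mem_filter.1 hyI).2⟩)
        · intro hσy
          exact hIA (Finset.mem_filter.2 ⟨hyτ, hσy⟩)
    have hmain := design_lam_ij ⟨hX, hkv, htk, ht1, hblocks, hlam⟩ (τ \ I) I
      (hIτ.trans hτX) ((Finset.sdiff_subset).trans hτX) (Finset.disjoint_sdiff)
      (by rw [hIcard, hJcard]; omega)
    rw [hIcard, hJcard] at hmain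
    have harg : v - Y.card - (t - Y.card) = v - t := by omega
    rw [harg] at hmain
    have hCpos : 0 < (v - t).choose (k - t) := Nat.choose_pos (by omega)
    have hval : (𝒜.filter (fun A => I ⊆ A ∧ Disjoint A (τ \ I))).card
        = lam * (v - t).choose (k - Y.card) / (v - t).choose (k - t) := by
      rw [← hmain, Nat.mul_div_cancel _ hCpos]
    rw [hfe, hval]
    exact ha Y.card (Finset.mem_Icc.2 ⟨h1, h2⟩)
  let Ψ : Finset ℕ × ℕ → Finset α := fun p => (BY p.1).toList.getD (p.2 - 1) ∅
  have hlen : ∀ p ∈ Rset t a, p.2 - 1 < (BY p.1).toList.length := by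
    intro p hp
    obtain ⟨hsub, hs1, hs2, hi1, hi2⟩ := Rset_mem hp
    have := hBYbound p.1 hsub hs1 hs2
    rw [Finset.length_toList]
    omega
  have hΨmem : ∀ p ∈ Rset t a, Ψ p ∈ BY p.1 := by
    intro p hp
    have hl := hlen p hp
    show (BY p.1).toList.getD (p.2 - 1) ∅ ∈ BY p.1
    rw [getD_lt _ _ hl]
    exact Finset.mem_toList.1 (List.getElem_mem hl)
  have hΨprop : ∀ p ∈ Rset t a, Ψ p ∈ 𝒜 ∧ ∀ y ∈ τ, (y ∈ Ψ p ↔ σ y ∈ p.1) := by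
    intro p hp
    exact Finset.mem_filter.1 (hΨmem p hp)
  have hΨinj : Set.InjOn Ψ ↑(Rset t a) := by
    intro p hp q hq heq
    rw [Finset.mem_coe] at hp hq
    have hp' := hΨprop p hp
    have hq' := hΨprop q hq
    have hfst : p.1 = q.1 := by
      ext j
      by_cases hjt : j ∈ Finset.Icc 1 t
      · obtain ⟨y, hyτ, rfl⟩ := hσsurj j hjt
        rw [← hp'.2 y hyτ, heq, hq'.2 y hyτ]
      · obtain ⟨hsubp, _⟩ := Rset_mem hp
        obtain ⟨hsubq, _⟩ := Rset_mem hq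
        exact iff_of_false (fun h => hjt (hsubp h)) (fun h => hjt (hsubq h))
    have hsnd : p.2 = q.2 := by
      have hl1 := hlen p hp
      have hl2 := hlen q hq
      rw [hfst] at hl1
      have heq' : (BY q.1).toList.getD (p.2 - 1) ∅ = (BY q.1).toList.getD (q.2 - 1) ∅ := by
        have h0 : Ψ p = Ψ q := heq
        rw [show Ψ p = (BY p.1).toList.getD (p.2 - 1) ∅ from rfl, hfst] at h0
        exact h0
      rw [getD_lt _ _ hl1, getD_lt _ _ hl2] at heq'
      have hidx := ((Finset.nodup_toList (BY q.1)).getElem_inj_iff).1 heq'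
      obtain ⟨_, _, _, hi1p, _⟩ := Rset_mem hp
      obtain ⟨_, _, _, hi1q, _⟩ := Rset_mem hq
      omega
    exact Prod.ext hfst hsnd
  refine ⟨(Rset t a).image Ψ, ?_, ?_, Function.invFunOn Ψ ↑(Rset t a), σ, ?_, hσbij, ?_⟩
  · intro A hA
    obtain ⟨p, hp, rfl⟩ := Finset.mem_image.1 hA
    exact (hΨprop p hp).1
  · rw [Finset.card_image_of_injOn hΨinj, Rset_card]
  · rw [Finset.coe_image]
    exact Set.BijOn.symm (hΨinj.bijOn_image.invOn_invFunOn).symm hΨinj.bijOn_image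
  · intro A hA y hy
    obtain ⟨p, hp, rfl⟩ := Finset.mem_image.1 hA
    have hρR := Function.invFunOn_mem (f := Ψ) (s := ↑(Rset t a)) ⟨p, hp, rfl⟩
    have hρeq := Function.invFunOn_eq (f := Ψ) (s := ↑(Rset t a)) ⟨p, hp, rfl⟩
    have hprop := (hΨprop _ (Finset.mem_coe.1 hρR)).2 y hy
    rw [hρeq] at hprop
    exact hprop

/-- `(P, B)` is a `(K,K',F,F',Z,Z',S)` HpPDA with `K = v`, `K' = t`, `F = b`,
`F' = Σ a_s·C(t,s)`, `Z = λ₁`, `Z' = Σ a_s·C(t−1,s−1)`, `S = Σ a_s·C(t,s+1)`,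
where `P` is the `b × v` star array of the design (`P_{A,x} = ⋆` iff `x ∈ A`)
and `B` is the array on `R × [t]`. Conjuncts: each column of `P` has exactly
`Z = λ₁` stars; `B` is a `(t, F', Z', S)` PDA (`|R| = F'`, each column has `Z'`
stars, `S` distinct integer entries, PDA condition C3); and for every `τ ⊆ X`
with `|τ| = t` there are `ζ ⊆ 𝒜` with `|ζ| = F'` and bijections `ρ : ζ → R`,
`σ : τ → [t]` under which the star pattern of `P` on `ζ × τ` coincides with
that of `B`. -/
theorem stmt11 {α : Type*} [DecidableEq α] (t v k lam b : ℕ)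
    (X : Finset α) (𝒜 : Finset (Finset α))
    (hdes : IsDesignF t v k lam X 𝒜) (hb : 𝒜.card = b) (ht : 2 ≤ t)
    (a : ℕ → ℕ)
    (ha : ∀ s ∈ Finset.Icc 1 (t - 1),
      a s ≤ lam * Nat.choose (v - t) (k - s) / Nat.choose (v - t) (k - t))
    (hnz : ∃ s ∈ Finset.Icc 1 (t - 1), a s ≠ 0) :
    -- each column of P contains exactly Z = λ₁ stars
    (∀ y ∈ X, (𝒜.filter (fun A => y ∈ A)).card =
        lam * Nat.choose (v - 1) (t - 1) / Nat.choose (k - 1) (t - 1)) ∧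
    -- B is a (K', F', Z', S) PDA
    ((Rset t a).card = ∑ s ∈ Finset.Icc 1 (t - 1), a s * Nat.choose t s ∧
      (∀ j ∈ Finset.Icc 1 t,
        ((Rset t a).filter (fun p => Bent p j = none)).card =
          ∑ s ∈ Finset.Icc 1 (t - 1), a s * Nat.choose (t - 1) (s - 1)) ∧
      (IntEntries t a).card =
        ∑ s ∈ Finset.Icc 1 (t - 1), a s * Nat.choose t (s + 1) ∧
      (∀ p ∈ Rset t a, ∀ p' ∈ Rset t a,
        ∀ j ∈ Finset.Icc 1 t, ∀ j' ∈ Finset.Icc 1 t,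
        (p, j) ≠ (p', j') → ∀ e : Finset ℕ × ℕ,
          Bent p j = some e → Bent p' j' = some e →
            p ≠ p' ∧ j ≠ j' ∧ Bent p j' = none ∧ Bent p' j = none)) ∧
    -- hotplug condition: every t-subset τ of columns has matching rows ζ
    (∀ τ : Finset α, τ ⊆ X → τ.card = t →
      ∃ ζ : Finset (Finset α), ζ ⊆ 𝒜 ∧
        ζ.card = ∑ s ∈ Finset.Icc 1 (t - 1), a s * Nat.choose t s ∧
        ∃ (ρ : Finset α → Finset ℕ × ℕ) (σ : α → ℕ),
          Set.BijOn ρ ↑ζ ↑(Rset t a) ∧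
          Set.BijOn σ ↑τ ↑(Finset.Icc 1 t) ∧
          ∀ A ∈ ζ, ∀ y ∈ τ, (y ∈ A ↔ σ y ∈ (ρ A).1)) := by
  
  have hdes' := hdes
  obtain ⟨hX, hkv, htk, ht1, hblocks, hlam⟩ := hdes'
  refine ⟨?_, ⟨Rset_card t a, fun j hj => Rset_col_stars a hj, IntEntries_card t a ht,
    fun p _ p' _ j _ j' _ hne e he he' => C3 p p' j j' hne e he he'⟩,
    fun τ hτX hτt => hotplug hdes ht a ha τ hτX hτt⟩
  intro y hy
  have h := design_lam_i hdes {y} (Finset.singleton_subset_iff.2 hy)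
    (by rw [Finset.card_singleton]; omega)
  rw [Finset.card_singleton] at h
  have hfe : 𝒜.filter (fun A => ({y} : Finset α) ⊆ A) = 𝒜.filter (fun A => y ∈ A) :=
    Finset.filter_congr (fun A _ => by simp)
  rw [hfe] at h
  have hpos : 0 < (k - 1).choose (t - 1) := Nat.choose_pos (by omega)
  rw [← h, Nat.mul_div_cancel _ hpos]
end
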